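/- Let G be a group and H a normal subgroup of G of index 3, and let V : G →* Abelianization H be the transfer homomorphism associated to the canonical projection H →* Abelianization H. Then for every g ∈ G with g ∉ H, one has g³ ∈ H and V(g) equals the image of g³ in Abelianization H (the 'outer transfer' formula). -/

import Mathlib

open MulAction Subgroup Function

private theorem conj_of_comm {H : Type} [Group H] {A : Type} [CommGroup A]
    (ϕ : H →* A) (x y : H) : ϕ (y⁻¹ * x * y) = ϕ x := by
  rw [map_mul, map_mul, map_inv, mul_comm, mul_inv_cancel_left]

/-- Outer transfer formula: if `H` is a normal subgroup of `G` of index `3` and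
`V : G →* Abelianization H` is the transfer homomorphism associated to the canonical
projection `H →* Abelianization H`, then for every `g ∈ G` with `g ∉ H` one has
`g³ ∈ H` and `V g` is the image of `g³` in `Abelianization H`. -/
theorem outer_transfer (G : Type) [Group G] (H : Subgroup G) [H.Normal]
    (hidx : H.index = 3) (g : G) (hg : g ∉ H) :
    ∃ hmem : g ^ 3 ∈ H,
      haveI : H.FiniteIndex := ⟨by omega⟩
      MonoidHom.transfer (Abelianization.of : ↥H →* Abelianization ↥H) g
        = Abelianization.of (⟨g ^ 3, hmem⟩ : ↥H) := by
  classical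
  haveI hFI : H.FiniteIndex := ⟨by omega⟩
  haveI := H.fintypeQuotientOfFiniteIndex
  have hcard : Nat.card (G ⧸ H) = 3 := by rw [← H.index_eq_card, hidx]
  have hg1 : (g : G ⧸ H) ≠ 1 := by
    simpa [QuotientGroup.eq_one_iff] using hg
  -- g ^ 3 ∈ H
  have hmem : g ^ 3 ∈ H := by
    have h1 : ((g ^ 3 : G) : G ⧸ H) = 1 := by
      rw [QuotientGroup.mk_pow, ← hcard]
      exact pow_card_eq_one'
    rwa [QuotientGroup.eq_one_iff] at h1
  refine ⟨hmem, ?_⟩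
  -- the image of g generates G ⧸ H
  have horder : orderOf (g : G ⧸ H) = 3 := by
    have hdvd : orderOf (g : G ⧸ H) ∣ 3 := hcard ▸ orderOf_dvd_natCard _
    rcases (Nat.prime_three).eq_one_or_self_of_dvd _ hdvd with h | h
    · exact absurd (orderOf_eq_one_iff.mp h) hg1
    · exact h
  have htop : Subgroup.zpowers (g : G ⧸ H) = ⊤ := by
    apply Subgroup.eq_top_of_card_eq
    rw [Nat.card_zpowers, horder, hcard]
  -- the action of zpowers g on G ⧸ H is pretransitive
  haveI hpt : IsPretransitive (zpowers g) (G ⧸ H) := by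
    constructor
    intro x y
    have : y * x⁻¹ ∈ Subgroup.zpowers (g : G ⧸ H) := htop ▸ Subgroup.mem_top _
    obtain ⟨n, hn⟩ := this
    refine ⟨⟨g, Subgroup.mem_zpowers g⟩ ^ n, ?_⟩
    have : ((⟨g, Subgroup.mem_zpowers g⟩ : zpowers g) ^ n) • x = ((g ^ n : G) : G ⧸ H) * x := rfl
    rw [this]
    have : ((g ^ n : G) : G ⧸ H) = (g : G ⧸ H) ^ n := by
      simp [QuotientGroup.mk_zpow]
    rw [this]
    have hn' : ((g : G ⧸ H)) ^ n = y * x⁻¹ := hn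
    rw [hn', inv_mul_cancel_right]
  haveI : Subsingleton (Quotient (orbitRel (zpowers g) (G ⧸ H))) :=
    (pretransitive_iff_subsingleton_quotient _ _).mp hpt
  rw [MonoidHom.transfer_eq_prod_quotient_orbitRel_zpowers_quot]
  set q : Quotient (orbitRel (zpowers g) (G ⧸ H)) := ⟦(1 : G ⧸ H)⟧ with hq
  rw [Fintype.prod_subsingleton _ q]
  -- minimal period is 3
  have hmp : Function.minimalPeriod (g • ·) q.out = 3 := by
    rw [minimalPeriod_eq_card, ← Nat.card_eq_fintype_card, Nat.card_coe_set_eq]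
    convert (Set.ncard_univ (G ⧸ H)).trans hcard using 2
    exact Set.eq_univ_of_forall fun y => hpt.exists_smul_eq q.out y
  -- rewrite the conjugate
  set r : G := q.out.out with hr
  have hrmem : ((r : G) : G ⧸ H) ∈ Subgroup.zpowers (g : G ⧸ H) := by rw [htop]; trivial
  obtain ⟨k, hk0⟩ := hrmem
  have hk : (g : G ⧸ H) ^ k = ((r : G) : G ⧸ H) := hk0
  have hh : (g ^ k)⁻¹ * r ∈ H := by
    rw [← QuotientGroup.eq_one_iff, QuotientGroup.mk_mul, QuotientGroup.mk_inv,
      QuotientGroup.mk_zpow, hk, inv_mul_cancel]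
  have hconj : r⁻¹ * g ^ 3 * r = ((g ^ k)⁻¹ * r)⁻¹ * g ^ 3 * ((g ^ k)⁻¹ * r) := by
    group
  have key : ∀ (m : ℕ) (hm : m = Function.minimalPeriod (g • ·) q.out)
      (hmem' : r⁻¹ * g ^ m * r ∈ H),
      Abelianization.of (⟨r⁻¹ * g ^ m * r, hmem'⟩ : ↥H)
        = Abelianization.of (⟨g ^ 3, hmem⟩ : ↥H) := by
    intro m hm hmem'
    have hm3 : m = 3 := hm.trans hmp
    subst hm3
    have heq : (⟨r⁻¹ * g ^ 3 * r, hmem'⟩ : ↥H)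
        = (⟨(g ^ k)⁻¹ * r, hh⟩ : ↥H)⁻¹ * ⟨g ^ 3, hmem⟩ * ⟨(g ^ k)⁻¹ * r, hh⟩ := by
      ext
      simpa using hconj
    rw [heq, conj_of_comm]
  exact key _ rfl _
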